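/- Over the atomic alphabet AT = {p}, the announcement formula ⟨p⟩⊤ is not equivalent to any purely propositional formula φ over AT: there is no propositional φ such that for every pointed Beth model (Θ, α), α forces ⟨p⟩⊤ iff α forces φ. -/
import Mathlib


/-- Propositional formulas over atoms `At`. -/
inductive PForm (At : Type) : Type
  | atom : At → PForm At
  | and  : PForm At → PForm At → PForm At
  | or   : PForm At → PForm At → PForm At
  | imp  : PForm At → PForm At → PForm At
  | neg  : PForm At → PForm At

/-- A path through `α`: a maximal chain containing `α`. -/
def IsPath {Q : Type} [PartialOrder Q] (α : Q) (P : Set Q) : Prop :=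
  α ∈ P ∧ IsChain (· ≤ ·) P ∧ ∀ P' : Set Q, IsChain (· ≤ ·) P' → P ⊆ P' → P' = P

/-- A bar for `α`: a set meeting every path through `α`. -/
def IsBar {Q : Type} [PartialOrder Q] (α : Q) (B : Set Q) : Prop :=
  ∀ P : Set Q, IsPath α P → (B ∩ P).Nonempty

/-- A Beth model: a rooted poset with a monotone assignment of sets of atoms. -/
structure Beth (At : Type) where
  Q : Type
  [ord : PartialOrder Q]
  root : Q
  root_le : ∀ β : Q, root ≤ β
  F : Q → Set At
  F_mono : ∀ {a b : Q}, a ≤ b → F a ⊆ F b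

attribute [instance] Beth.ord

/-- Beth forcing. -/
def Beth.force {At : Type} (Θ : Beth At) : PForm At → Θ.Q → Prop
  | .atom p, α => ∃ B, IsBar α B ∧ ∀ β ∈ B, p ∈ Θ.F β
  | .and A B, α => Θ.force A α ∧ Θ.force B α
  | .or A B, α => ∃ Bb, IsBar α Bb ∧ ∀ β ∈ Bb, Θ.force A β ∨ Θ.force B β
  | .imp A B, α => ∀ β, α ≤ β → Θ.force A β → Θ.force B β
  | .neg A, α => ∀ β, α ≤ β → ¬ Θ.force A β

lemma bar_of_root_bar {At : Type} (Θ : Beth At) {B : Set Θ.Q}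
    (hB : IsBar Θ.root B) (β : Θ.Q) : IsBar β B := by
  intro P hP
  obtain ⟨hβP, hch, hmax⟩ := hP
  have hroot : Θ.root ∈ P := by
    have hch' : IsChain (· ≤ ·) (insert Θ.root P) :=
      hch.insert (fun b _ _ => Or.inl (Θ.root_le b))
    have := hmax _ hch' (Set.subset_insert _ _)
    rw [← this]; exact Set.mem_insert _ _
  exact hB P ⟨hroot, hch, hmax⟩

lemma force_root_mono {At : Type} (Θ : Beth At) (φ : PForm At)
    (h : Θ.force φ Θ.root) (β : Θ.Q) : Θ.force φ β := by
  induction φ generalizing β with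
  | atom p =>
      obtain ⟨B, hB, hF⟩ := h
      exact ⟨B, bar_of_root_bar Θ hB β, hF⟩
  | and A B ihA ihB => exact ⟨ihA h.1 β, ihB h.2 β⟩
  | or A B ihA ihB =>
      obtain ⟨Bb, hB, hF⟩ := h
      exact ⟨Bb, bar_of_root_bar Θ hB β, hF⟩
  | imp A B ihA ihB =>
      intro δ _ hA
      exact h δ (Θ.root_le δ) hA
  | neg A ihA =>
      intro δ _ hA
      exact h δ (Θ.root_le δ) hA

/-- any path through α contains α, so {α} is a bar -/
lemma singleton_bar {Q : Type} [PartialOrder Q] (α : Q) : IsBar α {α} :=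
  fun _ hP => ⟨α, rfl, hP.1⟩

/-- three-node poset -/
inductive T3 | r | x | y
deriving DecidableEq

instance : PartialOrder T3 where
  le a b := a = T3.r ∨ a = b
  le_refl a := Or.inr rfl
  le_trans a b c h1 h2 := by
    rcases h1 with rfl | rfl
    · exact Or.inl rfl
    · exact h2
  le_antisymm a b h1 h2 := by
    rcases h1 with rfl | rfl
    · rcases h2 with rfl | rfl <;> rfl
    · rfl

lemma T3.le_def (a b : T3) : a ≤ b ↔ (a = T3.r ∨ a = b) := Iff.rfl

def Θ3 : Beth Unit where
  Q := T3
  root := T3.r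
  root_le := fun _ => Or.inl rfl
  F := fun t => match t with | T3.x => Set.univ | _ => ∅
  F_mono := by
    rintro a b (rfl | rfl)
    · intro u hu; cases hu
    · exact fun u hu => hu

def Θ1 : Beth Unit where
  Q := Unit
  root := ()
  root_le := fun _ => le_refl _
  F := fun _ => ∅
  F_mono := fun _ u hu => hu

lemma y_cone : ∀ β : T3, T3.y ≤ β → β = T3.y := by
  rintro β (h | rfl)
  · cases h
  · rfl

/-- {r, y} is a path through y -/
lemma path_ry : IsPath (Q := T3) T3.y {T3.r, T3.y} := by
  refine ⟨Or.inr rfl, ?_, ?_⟩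
  · rintro a (rfl | rfl) b (rfl | rfl) _ <;> first
      | exact Or.inl (Or.inl rfl)
      | exact Or.inl (Or.inr rfl)
      | exact Or.inr (Or.inl rfl)
      | exact Or.inr (Or.inr rfl)
      | simp_all
  · intro P' hch hsub
    apply Set.Subset.antisymm _ hsub
    intro z hz
    have hy : T3.y ∈ P' := hsub (Or.inr rfl)
    rcases eq_or_ne z T3.y with rfl | hne
    · exact Or.inr rfl
    · rcases hch hz hy hne with h | h
      · rcases h with rfl | rfl
        · exact Or.inl rfl
        · exact Or.inr rfl
      · rcases h with h | h
        · cases h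
        · exact Or.inr h.symm

lemma bar_y_mem {B : Set T3} (hB : IsBar T3.y B) : T3.r ∈ B ∨ T3.y ∈ B := by
  obtain ⟨z, hzB, hzP⟩ := hB _ path_ry
  rcases hzP with rfl | rfl
  · exact Or.inl hzB
  · exact Or.inr hzB

lemma bar_unit_mem {B : Set Unit} (hB : IsBar (Q := Unit) () B) : () ∈ B := by
  obtain ⟨z, hzB, _⟩ := hB {()} ⟨rfl, by rintro a - b - h; simp_all,
    fun P' _ hsub => Set.eq_of_subset_of_subset (fun z _ => rfl) hsub⟩
  exact hzB

/-- transfer between y-cone of Θ3 and Θ1 -/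
lemma transfer (φ : PForm Unit) : Θ3.force φ T3.y ↔ Θ1.force φ () := by
  induction φ with
  | atom p =>
      constructor
      · rintro ⟨B, hB, hF⟩
        exfalso
        rcases bar_y_mem hB with h | h
        · exact hF _ h
        · exact hF _ h
      · rintro ⟨B, hB, hF⟩
        exact absurd (hF _ (bar_unit_mem hB)) (fun h => h)
  | and A B ihA ihB =>
      exact and_congr ihA ihB
  | or A B ihA ihB =>
      constructor
      · rintro ⟨Bb, hB, hF⟩
        refine ⟨{()}, singleton_bar _, ?_⟩
        rintro β rfl
        rcases bar_y_mem hB with h | h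
        · rcases hF _ h with hA | hB'
          · exact Or.inl (ihA.mp (force_root_mono Θ3 A hA T3.y))
          · exact Or.inr (ihB.mp (force_root_mono Θ3 B hB' T3.y))
        · rcases hF _ h with hA | hB'
          · exact Or.inl (ihA.mp hA)
          · exact Or.inr (ihB.mp hB')
      · rintro ⟨Bb, hB, hF⟩
        refine ⟨{T3.y}, singleton_bar _, ?_⟩
        rintro β rfl
        rcases hF _ (bar_unit_mem hB) with hA | hB'
        · exact Or.inl (ihA.mpr hA)
        · exact Or.inr (ihB.mpr hB')
  | imp A B ihA ihB =>
      constructor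
      · intro h β _ hA
        exact ihB.mp (h T3.y (le_refl _) (ihA.mpr hA))
      · intro h β hβ hA
        rcases y_cone β hβ with rfl
        exact ihB.mpr (h () (le_refl _) (ihA.mp hA))
  | neg A ihA =>
      constructor
      · intro h β _ hA
        exact h T3.y (le_refl _) (ihA.mpr hA)
      · intro h β hβ hA
        rcases y_cone β hβ with rfl
        exact h () (le_refl _) (ihA.mp hA)

/-- over the single-atom alphabet, the announceability formula
`⟨p⟩⊤` — i.e. "the point does not force `¬p`" — is not equivalent to any purely
propositional formula over that alphabet. -/
theorem announce_top_not_propositional :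
    ¬ ∃ φ : PForm Unit,
      ∀ Θ : Beth Unit,
        (¬ Θ.force (.neg (.atom ())) Θ.root) ↔ Θ.force φ Θ.root := by
  rintro ⟨φ, h⟩
  -- In Θ3, ⟨p⟩⊤ holds at the root
  have h3 : ¬ Θ3.force (.neg (.atom ())) Θ3.root := by
    intro hneg
    exact hneg T3.x (Or.inl rfl) ⟨{T3.x}, singleton_bar _, by rintro β rfl; trivial⟩
  have hφroot : Θ3.force φ Θ3.root := (h Θ3).mp h3
  have hφy : Θ3.force φ T3.y := force_root_mono Θ3 φ hφroot T3.y
  have hφ1 : Θ1.force φ () := (transfer φ).mp hφy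
  -- In Θ1, ⟨p⟩⊤ fails at the root
  have h1 : Θ1.force (.neg (.atom ())) Θ1.root := by
    rintro β _ ⟨B, hB, hF⟩
    exact hF _ (bar_unit_mem hB)
  exact ((h Θ1).mpr hφ1) h1
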